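/- Let R be a commutative local ring, let n ≥ 1, let M be a free R-module admitting a basis indexed by Fin n, let L be a free R-module of rank 1, and let λ : ⋀ⁿ_R M ≃ L ⊗_R L be an R-linear isomorphism. Then there exist a basis f₁, …, fₙ of M and a basis element l of L such that λ(f₁ ∧ ⋯ ∧ fₙ) = l ⊗ l. -/

import Mathlib

open scoped TensorProduct

/-- The wedge product `f 0 ∧ ⋯ ∧ f (n-1)` of a family of vectors, as an element of the
`n`-th exterior power `⋀[R]^n M`. -/
noncomputable def wedgeProduct (R : Type*) [CommRing R] (M : Type*) [AddCommGroup M]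
    [Module R M] (n : ℕ) (f : Fin n → M) : ⋀[R]^n M :=
  ⟨ExteriorAlgebra.ιMulti R n f, ExteriorAlgebra.ιMulti_range R n (Set.mem_range_self f)⟩

/-- Any alternating map in `n` variables on a module with a basis indexed by `Fin n`
is determined by its value on the basis. -/
theorem alternating_eq_det_smul {R : Type*} [CommRing R] {M : Type*} [AddCommGroup M]
    [Module R M] {N : Type*} [AddCommGroup N] [Module R N] {n : ℕ}
    (e : Module.Basis (Fin n) R M) (f : M [⋀^(Fin n)]→ₗ[R] N) (v : Fin n → M) :
    f v = e.det v • f e := by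
  have h : f = (LinearMap.toSpanSingleton R N (f e)).compAlternatingMap e.det := by
    refine Module.Basis.ext_alternating e fun i hi => ?_
    let σ : Equiv.Perm (Fin n) := Equiv.ofBijective i (Finite.injective_iff_bijective.1 hi)
    have h1 : (fun j => e (i j)) = e ∘ σ := rfl
    rw [h1]
    simp [AlternatingMap.map_perm, Module.Basis.det_self]
  rw [h]
  simp [LinearMap.toSpanSingleton_apply, Module.Basis.det_self]

/-- Let `R` be a commutative local ring, `n ≥ 1`, `M` a free `R`-module
with a basis indexed by `Fin n`, `L` a free `R`-module of rank `1`, and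
`λ : ⋀ⁿ_R M ≃ L ⊗_R L` an `R`-linear isomorphism. Then there exist a basis `f` of `M` and
a basis element `l` of `L` (i.e. a basis of `L` indexed by `Fin 1`) such that
`λ (f 0 ∧ ⋯ ∧ f (n-1)) = l ⊗ l`. -/
theorem exists_basis_wedge_eq_tmul_sq_of_SLc_trivialization
    (R : Type*) [CommRing R] [IsLocalRing R]
    (M : Type*) [AddCommGroup M] [Module R M]
    (L : Type*) [AddCommGroup L] [Module R L]
    (n : ℕ) (hn : 1 ≤ n) (b : Module.Basis (Fin n) R M) (bL : Module.Basis (Fin 1) R L)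
    (lam : (⋀[R]^n M) ≃ₗ[R] (L ⊗[R] L)) :
    ∃ (f : Module.Basis (Fin n) R M) (c : Module.Basis (Fin 1) R L),
      lam (wedgeProduct R M n f) = c 0 ⊗ₜ[R] c 0 := by
  haveI : NeZero n := ⟨by omega⟩
  classical
  set e₁ : ⋀[R]^n M := wedgeProduct R M n b with he₁
  set bT : Module.Basis (Fin 1 × Fin 1) R (L ⊗[R] L) := Module.Basis.tensorProduct bL bL with hbT
  set t : L ⊗[R] L := bL 0 ⊗ₜ[R] bL 0 with ht
  have htb : t = bT (0, 0) := (Module.Basis.tensorProduct_apply bL bL 0 0).symm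
  -- write lam e₁ = r • t
  set r : R := bT.repr (lam e₁) (0, 0) with hr
  have hz : lam e₁ = r • t := by
    have := bT.sum_repr (lam e₁)
    rw [htb]
    rw [← this]
    rw [Fintype.sum_eq_single ((0 : Fin 1), (0 : Fin 1)) (by
      intro x hx
      exact absurd (Subsingleton.elim _ _) hx)]
  -- every element of the exterior power is a multiple of e₁
  have hspan : ∀ y : ⋀[R]^n M, ∃ s : R, y = s • e₁ := by
    intro y
    have hy : (y : ExteriorAlgebra R M) ∈
        Submodule.span R (Set.range (ExteriorAlgebra.ιMulti R n (M := M))) := by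
      rw [ExteriorAlgebra.ιMulti_span_fixedDegree]
      exact y.2
    have hle : Submodule.span R (Set.range (ExteriorAlgebra.ιMulti R n (M := M))) ≤
        Submodule.span R {(e₁ : ExteriorAlgebra R M)} := by
      rw [Submodule.span_le]
      rintro _ ⟨v, rfl⟩
      have := alternating_eq_det_smul b (ExteriorAlgebra.ιMulti R n (M := M)) v
      rw [this]
      exact Submodule.smul_mem _ _ (Submodule.subset_span rfl)
    obtain ⟨s, hs⟩ := Submodule.mem_span_singleton.1 (hle hy)
    exact ⟨s, Subtype.ext hs.symm⟩
  obtain ⟨s, hs⟩ := hspan (lam.symm t)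
  have hrs : s * r = 1 := by
    have h1 : t = (s * r) • t := by
      conv_lhs => rw [← lam.apply_symm_apply t, hs]
      rw [map_smul, hz, smul_smul]
    have := congrArg (fun x => bT.repr x (0, 0)) h1
    simp only [htb, map_smul, Finsupp.smul_apply, Module.Basis.repr_self,
      Finsupp.single_eq_same, smul_eq_mul, mul_one] at this
    exact this.symm
  have hru : IsUnit r := IsUnit.of_mul_eq_one (a := r) s (by rw [mul_comm]; exact hrs)
  set u : Rˣ := hru.unit with hu
  set w : Fin n → Rˣ := fun i => if i = 0 then u else 1 with hw
  refine ⟨b.unitsSMul w, bL.unitsSMul (fun _ => u), ?_⟩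
  have hprod : (∏ i, (w i : R)) = r := by
    rw [Finset.prod_eq_single (0 : Fin n) (by intro i _ hi; simp [hw, hi])
      (by intro h; exact absurd (Finset.mem_univ _) h)]
    simp [hw, hu]
  have hwedge : wedgeProduct R M n (b.unitsSMul w) = r • e₁ := by
    apply Subtype.ext
    show ExteriorAlgebra.ιMulti R n (fun i => b.unitsSMul w i) = r • _
    have hfun : (fun i => b.unitsSMul w i) = fun i => (w i : R) • b i := by
      funext i; exact Module.Basis.unitsSMul_apply i
    rw [hfun]
    have := (ExteriorAlgebra.ιMulti R n (M := M)).toMultilinearMap.map_smul_univ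
      (fun i => (w i : R)) b
    rw [AlternatingMap.coe_multilinearMap] at this
    rw [this, hprod]
    rfl
  rw [hwedge, map_smul, hz, smul_smul]
  have hc : bL.unitsSMul (fun _ => u) 0 = r • bL 0 := by
    rw [Module.Basis.unitsSMul_apply]; rfl
  rw [hc, TensorProduct.smul_tmul_smul]
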